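/- Let L ≥ 5 be odd and m = (L+3)/2, and let C be the explicit L×m intertwiner cell matrix between the graphs A_L and D_m. Then the symmetry operator on the A side satisfies C*Cᵀ = 1 + R_A, where 1 is the L×L identity matrix and R_A is the permutation matrix of the height reversal a ↦ L+1−a of A_L. -/
import Mathlib


open Matrix

/-- Adjacency matrix of the graph `A_L`, with vertices `1,…,L` encoded as `Fin L`
(vertex `a` is `a+1` in 1-based labelling): `A_{a,a'} = 1` iff `|a − a'| = 1`. -/
def adjA (L : ℕ) : Matrix (Fin L) (Fin L) ℤ := fun a a' =>
  if (a : ℕ) + 1 = (a' : ℕ) ∨ (a' : ℕ) + 1 = (a : ℕ) then 1 else 0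

/-- Adjacency matrix of the graph `D_m`, with vertices `1,…,m` encoded as `Fin m`.
In 1-based labels the edges are `{b,b+1}` for `1 ≤ b ≤ m−3`, `{m−2,m−1}` and
`{m−2,m}`; i.e. all consecutive pairs except `{m−1,m}`, plus the pair `{m−2,m}`.
In the 0-based encoding, `b` and `b'` are adjacent iff they are consecutive with
`b + b' + 3 ≠ 2m` (excluding the 1-based pair `{m−1,m}`), or differ by 2 with
`b + b' + 4 = 2m` (the 1-based pair `{m−2,m}`). -/
def adjD (m : ℕ) : Matrix (Fin m) (Fin m) ℤ := fun b b' =>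
  if ((b : ℕ) + 1 = (b' : ℕ) ∨ (b' : ℕ) + 1 = (b : ℕ)) ∧ (b : ℕ) + (b' : ℕ) + 3 ≠ 2 * m then 1
  else if ((b : ℕ) + 2 = (b' : ℕ) ∨ (b' : ℕ) + 2 = (b : ℕ)) ∧ (b : ℕ) + (b' : ℕ) + 4 = 2 * m then 1
  else 0

/-- The explicit `L×m` intertwiner cell matrix between `A_L` and `D_m`
(for odd `L` and `m = (L+3)/2`).  In 1-based labels:
`C_{a,b} = δ_{a,b} + δ_{a,L+1−b}` for `1 ≤ b ≤ m−2`, and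
`C_{a,m−1} = C_{a,m} = δ_{a,(L+1)/2}`.  In the 0-based encoding, for
`b + 3 ≤ m` the entry is `δ_{a,b} + δ_{a+b+1,L}`, and otherwise it is
`δ_{a+1,(L+1)/2}`. -/
def interC (L m : ℕ) : Matrix (Fin L) (Fin m) ℤ := fun a b =>
  if (b : ℕ) + 3 ≤ m then
    (if (a : ℕ) = (b : ℕ) then 1 else 0) + (if (a : ℕ) + (b : ℕ) + 1 = L then 1 else 0)
  else
    if (a : ℕ) + 1 = (L + 1) / 2 then 1 else 0

/-- Permutation matrix of the height reversal `a ↦ L+1−a` of `A_L`: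
`(R_A)_{a,a'} = δ_{a',L+1−a}`, i.e. in the 0-based encoding `a + a' + 1 = L`. -/
def heightRevA (L : ℕ) : Matrix (Fin L) (Fin L) ℤ := fun a a' =>
  if (a : ℕ) + (a' : ℕ) + 1 = L then 1 else 0

/-- Permutation matrix of the height reversal of `D_m`, fixing `1,…,m−2` and
interchanging `m−1` with `m`.  In the 0-based encoding, `b` with `b + 3 ≤ m` is
fixed, and otherwise `b` is sent to the `b'` with `b + b' + 3 = 2m`. -/
def heightRevD (m : ℕ) : Matrix (Fin m) (Fin m) ℤ := fun b b' =>
  if (b : ℕ) + 3 ≤ m then (if b = b' then 1 else 0)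
  else (if (b : ℕ) + (b' : ℕ) + 3 = 2 * m then 1 else 0)

/-- For odd `L ≥ 5` and `m = (L+3)/2`, the symmetry operator on the `A` side is
`C*Cᵀ = 1 + R_A`, where `R_A` is the height-reversal permutation matrix of `A_L`. -/

lemma delta_sum (n c : ℕ) :
    (∑ b ∈ Finset.range n, if b = c then (1:ℤ) else 0) = if c < n then 1 else 0 := by
  simp [Finset.sum_ite_eq', Finset.mem_range]

lemma key (k a a' : ℕ) (ha : a ≤ 2*k) (ha' : a' ≤ 2*k) :
    (∑ b ∈ Finset.range k,
      ((if a = b then (1:ℤ) else 0) + if a + b + 1 = 2*k+1 then 1 else 0) *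
      ((if a' = b then (1:ℤ) else 0) + if a' + b + 1 = 2*k+1 then 1 else 0))
    + (if a + 1 = k + 1 then (1:ℤ) else 0) * (if a' + 1 = k + 1 then 1 else 0)
    + (if a + 1 = k + 1 then (1:ℤ) else 0) * (if a' + 1 = k + 1 then 1 else 0)
    = (if a = a' then 1 else 0) + (if a + a' + 1 = 2*k+1 then 1 else 0) := by
  by_cases hP : a = a'
  · subst hP
    have e : ∀ b ∈ Finset.range k,
        ((if a = b then (1:ℤ) else 0) + if a + b + 1 = 2*k+1 then 1 else 0) *
        ((if a = b then (1:ℤ) else 0) + if a + b + 1 = 2*k+1 then 1 else 0)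
        = (if b = a then (1:ℤ) else 0) + (if b = 2*k - a then 1 else 0) := by
      intro b hb
      simp only [Finset.mem_range] at hb
      split_ifs <;> omega
    rw [Finset.sum_congr rfl e, Finset.sum_add_distrib, delta_sum, delta_sum]
    split_ifs <;> omega
  · by_cases hQ : a + a' + 1 = 2*k+1
    · have e : ∀ b ∈ Finset.range k,
          ((if a = b then (1:ℤ) else 0) + if a + b + 1 = 2*k+1 then 1 else 0) *
          ((if a' = b then (1:ℤ) else 0) + if a' + b + 1 = 2*k+1 then 1 else 0)
          = (if b = a then (1:ℤ) else 0) + (if b = a' then 1 else 0) := by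
        intro b hb
        simp only [Finset.mem_range] at hb
        split_ifs <;> omega
      rw [Finset.sum_congr rfl e, Finset.sum_add_distrib, delta_sum, delta_sum]
      split_ifs <;> omega
    · have e : ∀ b ∈ Finset.range k,
          ((if a = b then (1:ℤ) else 0) + if a + b + 1 = 2*k+1 then 1 else 0) *
          ((if a' = b then (1:ℤ) else 0) + if a' + b + 1 = 2*k+1 then 1 else 0)
          = (0:ℤ) := by
        intro b hb
        simp only [Finset.mem_range] at hb
        split_ifs <;> omega
      rw [Finset.sum_congr rfl e, Finset.sum_const_zero]
      split_ifs <;> omega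

theorem cell_symmetry_operator_A (L : ℕ) (hL : 5 ≤ L) (hodd : Odd L)
    (m : ℕ) (hm : m = (L + 3) / 2) :
    interC L m * (interC L m)ᵀ = 1 + heightRevA L := by
  obtain ⟨k, hk⟩ := hodd
  subst hk
  have hk2 : 2 ≤ k := by omega
  have hm' : m = k + 2 := by omega
  subst hm'
  ext a a'
  have ha : (a:ℕ) ≤ 2*k := by omega
  have ha' : (a':ℕ) ≤ 2*k := by omega
  rw [Matrix.mul_apply]
  simp only [transpose_apply, Matrix.add_apply, Matrix.one_apply, interC, heightRevA]
  rw [Fin.sum_univ_eq_sum_range (fun n =>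
    (if n + 3 ≤ k + 2 then
      (if (a:ℕ) = n then (1:ℤ) else 0) + (if (a:ℕ) + n + 1 = 2*k+1 then 1 else 0)
    else if (a:ℕ) + 1 = (2*k+1+1)/2 then 1 else 0) *
    (if n + 3 ≤ k + 2 then
      (if (a':ℕ) = n then (1:ℤ) else 0) + (if (a':ℕ) + n + 1 = 2*k+1 then 1 else 0)
    else if (a':ℕ) + 1 = (2*k+1+1)/2 then 1 else 0))]
  rw [Finset.sum_range_succ, Finset.sum_range_succ]
  have hdiv : (2*k+1+1)/2 = k+1 := by omega
  rw [hdiv]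
  simp only [if_neg (show ¬ k + 3 ≤ k + 2 by omega), if_neg (show ¬ k + 1 + 3 ≤ k + 2 by omega)]
  have e : ∀ n ∈ Finset.range k,
      (if n + 3 ≤ k + 2 then
        (if (a:ℕ) = n then (1:ℤ) else 0) + (if (a:ℕ) + n + 1 = 2*k+1 then 1 else 0)
      else if (a:ℕ) + 1 = k+1 then 1 else 0) *
      (if n + 3 ≤ k + 2 then
        (if (a':ℕ) = n then (1:ℤ) else 0) + (if (a':ℕ) + n + 1 = 2*k+1 then 1 else 0)
      else if (a':ℕ) + 1 = k+1 then 1 else 0)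
      = ((if (a:ℕ) = n then (1:ℤ) else 0) + (if (a:ℕ) + n + 1 = 2*k+1 then 1 else 0)) *
        ((if (a':ℕ) = n then (1:ℤ) else 0) + (if (a':ℕ) + n + 1 = 2*k+1 then 1 else 0)) := by
    intro n hn
    simp only [Finset.mem_range] at hn
    have h3 : n + 3 ≤ k + 2 := by omega
    simp only [if_pos h3]
  rw [Finset.sum_congr rfl e]
  have := key k a a' ha ha'
  have hfin : (a = a') ↔ ((a:ℕ) = (a':ℕ)) := Fin.ext_iff
  rw [show ((if a = a' then (1:ℤ) else 0) = if (a:ℕ) = (a':ℕ) then 1 else 0) by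
    simp [hfin]]
  linarith [key k a a' ha ha']
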